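/- Let $c_0 > 0$, $\Delta t > 0$, $n \ge 1$ an integer, and $k \ge 0$ an integer. Then $1 + c_0 \Delta t \sum_{l=0}^{k} \frac{1}{l!} \cdot \frac{e^{c_0(l+1)(n-1)\Delta t} - 1}{e^{c_0(l+1)\Delta t} - 1} \le \sum_{l=0}^{k+1} \frac{e^{c_0 l (n-1)\Delta t}}{l!}$. -/

import Mathlib

theorem stability_induction_step (c0 Δt : ℝ) (hc : 0 < c0) (hΔ : 0 < Δt)
    (n : ℕ) (hn : 1 ≤ n) (k : ℕ) :
    1 + c0 * Δt * ∑ l ∈ Finset.range (k + 1),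
        (1 / (l.factorial : ℝ)) *
          ((Real.exp (c0 * ((l : ℝ) + 1) * ((n : ℝ) - 1) * Δt) - 1) /
            (Real.exp (c0 * ((l : ℝ) + 1) * Δt) - 1))
      ≤ ∑ l ∈ Finset.range (k + 2),
          Real.exp (c0 * (l : ℝ) * ((n : ℝ) - 1) * Δt) / (l.factorial : ℝ) := by
  rw [Finset.sum_range_succ' (fun l => Real.exp (c0 * (l : ℝ) * ((n : ℝ) - 1) * Δt) / (l.factorial : ℝ)) (k+1)]
  simp only [Nat.cast_zero, mul_zero, zero_mul, Real.exp_zero, Nat.factorial_zero, Nat.cast_one,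
    div_one]
  rw [add_comm _ (1:ℝ), Finset.mul_sum]
  refine add_le_add_right (Finset.sum_le_sum fun l hl => ?_) 1
  set E := Real.exp (c0 * ((l : ℝ) + 1) * ((n : ℝ) - 1) * Δt) with hE
  set D := Real.exp (c0 * ((l : ℝ) + 1) * Δt) with hD
  have hl1 : (0:ℝ) < (l : ℝ) + 1 := by positivity
  have hn1 : (0:ℝ) ≤ (n : ℝ) - 1 := by
    have : (1:ℝ) ≤ (n : ℝ) := by exact_mod_cast hn
    linarith
  have hDlb : c0 * ((l : ℝ) + 1) * Δt ≤ D - 1 := by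
    have := Real.add_one_le_exp (c0 * ((l : ℝ) + 1) * Δt)
    linarith
  have hD1 : (0:ℝ) < D - 1 := lt_of_lt_of_le (by positivity) hDlb
  have hE1 : (1:ℝ) ≤ E := by
    rw [hE]
    have : (0:ℝ) ≤ c0 * ((l : ℝ) + 1) * ((n : ℝ) - 1) * Δt := by positivity
    calc (1:ℝ) = Real.exp 0 := by simp
    _ ≤ _ := Real.exp_le_exp.mpr this
  have hfac : ((l+1).factorial : ℝ) = ((l:ℝ) + 1) * (l.factorial : ℝ) := by
    rw [Nat.factorial_succ]; push_cast; ring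
  have hfacpos : (0:ℝ) < (l.factorial : ℝ) := by positivity
  have hcast : ((l:ℝ) + 1) = (((l+1 : ℕ)) : ℝ) := by push_cast; ring
  have hc1 : ((l+1:ℕ):ℝ) = (l:ℝ)+1 := by push_cast; ring
  rw [hc1, hfac, ← hE]
  have lhs_eq : c0 * Δt * (1 / (l.factorial:ℝ) * ((E - 1) / (D - 1)))
      = (c0 * Δt * (E - 1)) / ((l.factorial:ℝ) * (D - 1)) := by
    field_simp
  rw [lhs_eq, div_le_div_iff₀ (by positivity) (by positivity)]
  have key : c0 * Δt * (E - 1) * ((l:ℝ) + 1) ≤ E * (D - 1) := by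
    calc c0 * Δt * (E - 1) * ((l:ℝ) + 1) = (c0 * ((l:ℝ)+1) * Δt) * (E - 1) := by ring
    _ ≤ (D - 1) * E := by
        apply mul_le_mul hDlb (by linarith) (by linarith) (le_of_lt hD1)
    _ = E * (D - 1) := by ring
  nlinarith [hfacpos, key]
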